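/- arXiv:2106.03190 — 3 statements merged into one kernel-verified Lean document; each statement's English description precedes it below -/
import Mathlib

section
/- For the complete bipartite graph K_{n₁,n₂} with n₁, n₂ ≥ 1, the first Banhatti-Sombor index satisfies BSO(K_{n₁,n₂}) = √(n₁² + n₂²). -/
open Finset

/-- The first Banhatti-Sombor index of a finite simple graph:
`BSO(G) = Σ_{uv ∈ E(G)} √(1/k_u² + 1/k_v²)`, where `k_u` is the degree of `u`. -/
noncomputable def banhattiSomborIndex {V : Type*} [Fintype V] (G : SimpleGraph V)
    [DecidableRel G.Adj] : ℝ :=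
  ∑ e ∈ G.edgeFinset,
    Sym2.lift ⟨fun u v => Real.sqrt (1 / (G.degree u : ℝ) ^ 2 + 1 / (G.degree v : ℝ) ^ 2),
      fun u v => by dsimp only; rw [add_comm]⟩ e

instance {V W : Type*} [DecidableEq V] [DecidableEq W] :
    DecidableRel (completeBipartiteGraph V W).Adj :=
  fun a b => by unfold completeBipartiteGraph; dsimp; infer_instance

lemma deg_inl (n₁ n₂ : ℕ) (a : Fin n₁) :
    (completeBipartiteGraph (Fin n₁) (Fin n₂)).degree (Sum.inl a) = n₂ := by
  simp only [SimpleGraph.degree, SimpleGraph.neighborFinset_eq_filter]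
  rw [Finset.filter_congr_decidable]
  rw [Finset.card_filter, Fintype.sum_sum_type]
  simp [completeBipartiteGraph]

lemma deg_inr (n₁ n₂ : ℕ) (b : Fin n₂) :
    (completeBipartiteGraph (Fin n₁) (Fin n₂)).degree (Sum.inr b) = n₁ := by
  simp only [SimpleGraph.degree, SimpleGraph.neighborFinset_eq_filter]
  rw [Finset.filter_congr_decidable]
  rw [Finset.card_filter, Fintype.sum_sum_type]
  simp [completeBipartiteGraph]

lemma card_edges (n₁ n₂ : ℕ) :
    (completeBipartiteGraph (Fin n₁) (Fin n₂)).edgeFinset.card = n₁ * n₂ := by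
  have h := SimpleGraph.sum_degrees_eq_twice_card_edges (completeBipartiteGraph (Fin n₁) (Fin n₂))
  rw [Fintype.sum_sum_type] at h
  simp only [deg_inl, deg_inr, Finset.sum_const, Finset.card_univ, Fintype.card_fin,
    smul_eq_mul] at h
  rw [mul_comm n₂ n₁] at h; omega


/-- For the complete bipartite graph `K_{n₁,n₂}` with `n₁, n₂ ≥ 1`,
`BSO(K_{n₁,n₂}) = √(n₁² + n₂²)`. -/
theorem banhattiSomborIndex_completeBipartite (n₁ n₂ : ℕ) (h₁ : 1 ≤ n₁) (h₂ : 1 ≤ n₂) :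
    banhattiSomborIndex (completeBipartiteGraph (Fin n₁) (Fin n₂)) =
      Real.sqrt ((n₁ : ℝ) ^ 2 + (n₂ : ℝ) ^ 2) := by
  set c : ℝ := Real.sqrt (1 / (n₂ : ℝ) ^ 2 + 1 / (n₁ : ℝ) ^ 2) with hc
  have hconst : ∀ e ∈ (completeBipartiteGraph (Fin n₁) (Fin n₂)).edgeFinset,
      Sym2.lift ⟨fun u v => Real.sqrt
          (1 / ((completeBipartiteGraph (Fin n₁) (Fin n₂)).degree u : ℝ) ^ 2 +
           1 / ((completeBipartiteGraph (Fin n₁) (Fin n₂)).degree v : ℝ) ^ 2),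
        fun u v => by dsimp only; rw [add_comm]⟩ e = c := by
    intro e he
    induction e using Sym2.ind with
    | _ u v =>
      rw [SimpleGraph.mem_edgeFinset, SimpleGraph.mem_edgeSet] at he
      rcases u with a | b <;> rcases v with a' | b' <;>
        simp only [completeBipartiteGraph] at he <;> simp at he
      · simp [Sym2.lift_mk, deg_inl, deg_inr, hc]
      · simp [Sym2.lift_mk, deg_inl, deg_inr, hc, add_comm]
  rw [banhattiSomborIndex, Finset.sum_congr rfl hconst, Finset.sum_const, card_edges,
    nsmul_eq_mul, hc]
  have hn₁ : (0:ℝ) < n₁ := by positivity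
  have hn₂ : (0:ℝ) < n₂ := by positivity
  push_cast
  rw [← Real.sqrt_sq (by positivity : (0:ℝ) ≤ (n₁:ℝ) * n₂), ← Real.sqrt_mul (by positivity)]
  congr 1
  field_simp
end

section
/- For every real r with 0 ≤ r ≤ 1, the 4-dimensional Lebesgue measure of the set {(x, y) ∈ [0,1]² × [0,1]² : dist(x, y) ≤ r} equals r²(π − (8/3)r + (1/2)r²), i.e. π r² − (8/3) r³ + (1/2) r⁴; equivalently, if X and Y are independent points uniformly distributed on the unit square [0,1]², then P(dist(X,Y) ≤ r) = π r² − (8/3) r³ + (1/2) r⁴. -/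
open MeasureTheory Real intervalIntegral


noncomputable def I1 : ℝ → ENNReal := (Set.Icc (0:ℝ) 1).indicator 1

lemma measI1 : Measurable I1 := measurable_const.indicator measurableSet_Icc

lemma key_kernel (u : ℝ) : ∫⁻ a : ℝ, I1 a * I1 (a - u) = ENNReal.ofReal (1 - |u|) := by
  have h1 : ∀ a, I1 a * I1 (a - u) = (Set.Icc (0:ℝ) 1 ∩ Set.Icc u (1+u)).indicator 1 a := by
    intro a
    have : a - u ∈ Set.Icc (0:ℝ) 1 ↔ a ∈ Set.Icc u (1+u) := by
      simp only [Set.mem_Icc]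
      constructor <;> intro h <;> constructor <;> linarith [h.1, h.2]
    by_cases h : a ∈ Set.Icc (0:ℝ) 1 <;> by_cases h' : a ∈ Set.Icc u (1+u) <;>
      simp [I1, Set.indicator_apply, h, h', this]
  simp_rw [h1]
  rw [lintegral_indicator_one (measurableSet_Icc.inter measurableSet_Icc),
    Set.Icc_inter_Icc, Real.volume_Icc]
  congr 1
  rcases le_total 0 u with h | h
  · rw [abs_of_nonneg h, max_eq_right h, min_eq_left (by linarith)]
  · rw [abs_of_nonpos h, max_eq_left h, min_eq_right (by linarith)]
    ring

lemma diff_lemma (f : ℝ → ENNReal) (hf : Measurable f) :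
    ∫⁻ a : ℝ, ∫⁻ c : ℝ, I1 a * I1 c * f (a - c) = ∫⁻ u : ℝ, ENNReal.ofReal (1 - |u|) * f u := by
  have h1 : ∀ a : ℝ, ∫⁻ c : ℝ, I1 a * I1 c * f (a - c) = ∫⁻ u : ℝ, I1 a * I1 (a - u) * f u := by
    intro a
    rw [← (Measure.measurePreserving_sub_left volume a).lintegral_comp
      (f := fun c => I1 a * I1 c * f (a - c))
      ((measurable_const.mul measI1).mul (hf.comp (measurable_const.sub measurable_id)))]
    simp
  simp_rw [h1]
  rw [lintegral_lintegral_swap]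
  · refine lintegral_congr fun u => ?_
    rw [lintegral_mul_const (f := fun x : ℝ => I1 x * I1 (x - u)) _ ((measI1.mul (measI1.comp (measurable_id.sub measurable_const)) :
      Measurable fun x : ℝ => I1 x * I1 (x - u))), key_kernel]
  · exact (((measI1.comp measurable_fst).mul
      (measI1.comp (measurable_fst.sub measurable_snd))).mul
      (hf.comp measurable_snd)).aemeasurable


-- ∫_{-t}^{t} |v| dv = t^2  (for t ≥ 0)
lemma integral_abs_id (t : ℝ) (ht : 0 ≤ t) : ∫ v in (-t)..t, |v| = t ^ 2 := by
  have hi : ∀ a b : ℝ, IntervalIntegrable (fun v : ℝ => |v|) volume a b :=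
    fun a b => (continuous_abs).intervalIntegrable a b
  rw [← intervalIntegral.integral_add_adjacent_intervals (hi (-t) 0) (hi 0 t)]
  have h2 : ∫ v in (0:ℝ)..t, |v| = t ^ 2 / 2 := by
    rw [intervalIntegral.integral_congr (g := fun v => v) ?_, integral_id]
    · ring
    · intro v hv
      rw [Set.uIcc_of_le ht] at hv
      exact abs_of_nonneg hv.1
  have h1 : ∫ v in (-t)..(0:ℝ), |v| = t ^ 2 / 2 := by
    have := intervalIntegral.integral_comp_neg (a := (0:ℝ)) (b := t) (fun v : ℝ => |v|)
    simp only [abs_neg, neg_zero] at this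
    rw [← this, h2]
  rw [h1, h2]; ring

lemma integral_one_sub_abs (t : ℝ) (ht : 0 ≤ t) :
    ∫ v in Set.Icc (-t) t, (1 - |v|) = 2 * t - t ^ 2 := by
  rw [MeasureTheory.integral_Icc_eq_integral_Ioc,
    ← intervalIntegral.integral_of_le (by linarith : -t ≤ t),
    intervalIntegral.integral_sub (intervalIntegrable_const) ((continuous_abs).intervalIntegrable _ _),
    integral_abs_id t ht, intervalIntegral.integral_const]
  simp; ring


lemma P1 (r : ℝ) (h0 : 0 ≤ r) : ∫ u in (-r)..r, Real.sqrt (r^2 - u^2) = π * r^2 / 2 := by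
  rcases eq_or_lt_of_le h0 with rfl | hr
  · simp
  · have h := intervalIntegral.integral_comp_mul_left (a := (-1:ℝ)) (b := 1)
      (f := fun u => Real.sqrt (r^2 - u^2)) (c := r) (ne_of_gt hr)
    have h2 : ∀ x : ℝ, Real.sqrt (r^2 - (r*x)^2) = r * Real.sqrt (1 - x^2) := by
      intro x
      rw [show r^2 - (r*x)^2 = r^2 * (1 - x^2) by ring, Real.sqrt_mul (sq_nonneg r),
        Real.sqrt_sq h0]
    simp only [h2] at h
    rw [intervalIntegral.integral_const_mul, integral_sqrt_one_sub_sq] at h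
    rw [show r * (-1) = -r by ring, mul_one, smul_eq_mul] at h
    have hne : r ≠ 0 := ne_of_gt hr
    field_simp at h
    linarith [h]

lemma P2 (r : ℝ) : ∫ u in (-r)..r, (r^2 - u^2) = 4/3 * r^3 := by
  rw [intervalIntegral.integral_sub intervalIntegrable_const
    ((continuous_pow 2).intervalIntegrable _ _), integral_pow, intervalIntegral.integral_const]
  norm_num; ring

lemma half_P3 (r : ℝ) (h0 : 0 ≤ r) : ∫ u in (0:ℝ)..r, u * Real.sqrt (r^2 - u^2) = r^3 / 3 := by
  have hderiv : ∀ x ∈ Set.uIcc (0:ℝ) r, HasDerivAt (fun u : ℝ => r^2 - u^2) (-2*x) x := by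
    intro x _
    simpa using (hasDerivAt_pow 2 x).const_sub (r^2)
  have hcont : ContinuousOn (fun x : ℝ => -2*x) (Set.uIcc 0 r) := by fun_prop
  have hsub := intervalIntegral.integral_comp_mul_deriv hderiv hcont Real.continuous_sqrt
  -- hsub : ∫ x in 0..r, √(r^2-x^2) * (-2*x) = ∫ u in (r^2-0^2)..(r^2-r^2), √u
  have hval : ∫ u in (r^2 - 0^2)..(r^2 - r^2), Real.sqrt u = -(2/3 * r^3) := by
    rw [show r^2 - 0^2 = r^2 by ring, show r^2 - r^2 = (0:ℝ) by ring,
      intervalIntegral.integral_symm]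
    have : ∫ u in (0:ℝ)..(r^2), Real.sqrt u = 2/3 * r^3 := by
      rw [intervalIntegral.integral_congr (g := fun u : ℝ => u ^ (1/2 : ℝ))
        (fun u _ => Real.sqrt_eq_rpow u)]
      rw [integral_rpow (Or.inl (by norm_num))]
      rw [Real.zero_rpow (by norm_num)]
      rw [show ((r:ℝ)^2) = r ^ ((2:ℕ):ℝ) from (Real.rpow_natCast r 2).symm]
      rw [← Real.rpow_mul h0]
      norm_num
      ring
    rw [this]
  rw [intervalIntegral.integral_congr
    (g := fun u : ℝ => (-(1/2 : ℝ)) * (Real.sqrt (r^2 - u^2) * ((fun x : ℝ => -2*x) u)))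
    (fun u _ => by simp; ring)]
  rw [intervalIntegral.integral_const_mul]
  simp only [Function.comp] at hsub
  rw [hsub, hval]
  ring

lemma P3 (r : ℝ) (h0 : 0 ≤ r) : ∫ u in (-r)..r, |u| * Real.sqrt (r^2 - u^2) = 2/3 * r^3 := by
  have hc : Continuous fun u : ℝ => |u| * Real.sqrt (r^2 - u^2) := by fun_prop
  have hi : ∀ a b : ℝ, IntervalIntegrable (fun u : ℝ => |u| * Real.sqrt (r^2 - u^2)) volume a b :=
    fun a b => hc.intervalIntegrable a b
  have hhalf : ∫ u in (0:ℝ)..r, |u| * Real.sqrt (r^2 - u^2) = r^3/3 := by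
    rw [intervalIntegral.integral_congr (g := fun u : ℝ => u * Real.sqrt (r^2 - u^2)) ?_,
      half_P3 r h0]
    intro u hu
    rw [Set.uIcc_of_le h0] at hu
    simp [abs_of_nonneg hu.1]
  have hleft : ∫ u in (-r)..(0:ℝ), |u| * Real.sqrt (r^2 - u^2) = r^3/3 := by
    have := intervalIntegral.integral_comp_neg (a := (0:ℝ)) (b := r)
      (fun u : ℝ => |u| * Real.sqrt (r^2 - u^2))
    simp only [abs_neg, neg_sq, neg_zero] at this
    rw [← this, hhalf]
  rw [← intervalIntegral.integral_add_adjacent_intervals (hi (-r) 0) (hi 0 r), hhalf, hleft]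
  ring

lemma half_P4 (r : ℝ) : ∫ u in (0:ℝ)..r, u * (r^2 - u^2) = r^4/4 := by
  rw [intervalIntegral.integral_congr (g := fun u : ℝ => r^2 * u - u^3) (fun u _ => by ring)]
  rw [intervalIntegral.integral_sub (((by fun_prop : Continuous fun u : ℝ => r^2*u)).intervalIntegrable _ _)
    ((continuous_pow 3).intervalIntegrable _ _), intervalIntegral.integral_const_mul,
    integral_id, integral_pow]
  norm_num
  ring

lemma P4 (r : ℝ) (h0 : 0 ≤ r) : ∫ u in (-r)..r, |u| * (r^2 - u^2) = 1/2 * r^4 := by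
  have hc : Continuous fun u : ℝ => |u| * (r^2 - u^2) := by fun_prop
  have hi : ∀ a b : ℝ, IntervalIntegrable (fun u : ℝ => |u| * (r^2 - u^2)) volume a b :=
    fun a b => hc.intervalIntegrable a b
  have hhalf : ∫ u in (0:ℝ)..r, |u| * (r^2 - u^2) = r^4/4 := by
    rw [intervalIntegral.integral_congr (g := fun u : ℝ => u * (r^2 - u^2)) ?_, half_P4 r]
    intro u hu
    rw [Set.uIcc_of_le h0] at hu
    simp [abs_of_nonneg hu.1]
  have hleft : ∫ u in (-r)..(0:ℝ), |u| * (r^2 - u^2) = r^4/4 := by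
    have := intervalIntegral.integral_comp_neg (a := (0:ℝ)) (b := r)
      (fun u : ℝ => |u| * (r^2 - u^2))
    simp only [abs_neg, neg_sq, neg_zero] at this
    rw [← this, hhalf]
  rw [← intervalIntegral.integral_add_adjacent_intervals (hi (-r) 0) (hi 0 r), hhalf, hleft]
  ring

lemma final_integral (r : ℝ) (h0 : 0 ≤ r) :
    ∫ u in (-r)..r, (1 - |u|) * (2 * Real.sqrt (r^2 - u^2) - (r^2 - u^2)) =
      π * r^2 - 8/3 * r^3 + 1/2 * r^4 := by
  have c1 : Continuous fun u : ℝ => Real.sqrt (r^2 - u^2) := by fun_prop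
  have key : ∀ u : ℝ, (1 - |u|) * (2 * Real.sqrt (r^2 - u^2) - (r^2 - u^2)) =
      2 * Real.sqrt (r^2 - u^2) - (r^2 - u^2) - 2 * (|u| * Real.sqrt (r^2 - u^2))
        + |u| * (r^2 - u^2) := fun u => by ring
  rw [intervalIntegral.integral_congr (g := fun u : ℝ =>
      2 * Real.sqrt (r^2 - u^2) - (r^2 - u^2) - 2 * (|u| * Real.sqrt (r^2 - u^2))
        + |u| * (r^2 - u^2)) (fun u _ => key u)]
  have i1 : IntervalIntegrable (fun u : ℝ => 2 * Real.sqrt (r^2 - u^2)) volume (-r) r :=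
    (continuous_const.mul c1).intervalIntegrable _ _
  have i2 : IntervalIntegrable (fun u : ℝ => r^2 - u^2) volume (-r) r :=
    (continuous_const.sub (continuous_pow 2)).intervalIntegrable _ _
  have i3 : IntervalIntegrable (fun u : ℝ => 2 * (|u| * Real.sqrt (r^2 - u^2))) volume (-r) r :=
    (continuous_const.mul (continuous_abs.mul c1)).intervalIntegrable _ _
  have i4 : IntervalIntegrable (fun u : ℝ => |u| * (r^2 - u^2)) volume (-r) r :=
    (continuous_abs.mul (continuous_const.sub (continuous_pow 2))).intervalIntegrable _ _
  rw [intervalIntegral.integral_add ((i1.sub i2).sub i3) i4,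
    intervalIntegral.integral_sub (i1.sub i2) i3, intervalIntegral.integral_sub i1 i2,
    intervalIntegral.integral_const_mul, intervalIntegral.integral_const_mul,
    P1 r h0, P2 r, P3 r h0, P4 r h0]
  ring



noncomputable def B2 (r : ℝ) : ℝ → ℝ → ENNReal := fun u v => if u^2 + v^2 ≤ r^2 then 1 else 0

lemma measB2 (r : ℝ) : Measurable (Function.uncurry (B2 r)) := by
  have h : MeasurableSet {p : ℝ × ℝ | p.1^2 + p.2^2 ≤ r^2} :=
    (isClosed_le (by fun_prop) continuous_const).measurableSet
  exact Measurable.ite h measurable_const measurable_const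

noncomputable def J2 (r : ℝ) : ℝ → ENNReal :=
  fun u => ∫⁻ v, ENNReal.ofReal (1 - |v|) * B2 r u v

lemma measJ2 (r : ℝ) : Measurable (J2 r) := by
  apply Measurable.lintegral_prod_right'
    (f := fun p : ℝ × ℝ => ENNReal.ofReal (1 - |p.2|) * B2 r p.1 p.2)
  exact ((measurable_const.sub measurable_snd.abs).ennreal_ofReal).mul (measB2 r)

lemma J2_eq (r : ℝ) (h0 : 0 ≤ r) (h1 : r ≤ 1) (u : ℝ) :
    J2 r u = ENNReal.ofReal ((Set.Icc (-r) r).indicator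
      (fun u => 2 * Real.sqrt (r^2 - u^2) - (r^2 - u^2)) u) := by
  by_cases hu : |u| ≤ r
  · have hru : (0:ℝ) ≤ r^2 - u^2 := by nlinarith [abs_nonneg u, sq_abs u]
    set t := Real.sqrt (r^2 - u^2) with htdef
    have ht0 : 0 ≤ t := Real.sqrt_nonneg _
    have ht2 : t^2 = r^2 - u^2 := Real.sq_sqrt hru
    have htr : t ≤ 1 := by
      have h3 : t ≤ Real.sqrt (r^2) := Real.sqrt_le_sqrt (by nlinarith)
      rw [Real.sqrt_sq h0] at h3; linarith
    have hB : ∀ v, B2 r u v = (Set.Icc (-t) t).indicator 1 v := by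
      intro v
      have hiff : u^2 + v^2 ≤ r^2 ↔ v ∈ Set.Icc (-t) t := by
        rw [Set.mem_Icc, ← abs_le]
        constructor
        · intro h; nlinarith [sq_abs v, abs_nonneg v]
        · intro h; nlinarith [sq_abs v, abs_nonneg v]
      by_cases h : u^2 + v^2 ≤ r^2 <;>
        simp [B2, Set.indicator_apply, h, hiff.symm, ← hiff]
    have hpoint : ∀ v, ENNReal.ofReal (1 - |v|) * B2 r u v
        = (Set.Icc (-t) t).indicator (fun v => ENNReal.ofReal (1 - |v|)) v := by
      intro v; rw [hB v]
      by_cases hv : v ∈ Set.Icc (-t) t <;> simp [Set.indicator_apply, hv]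
    have hJ : J2 r u = ∫⁻ v in Set.Icc (-t) t, ENNReal.ofReal (1 - |v|) := by
      unfold J2
      simp_rw [hpoint]
      exact lintegral_indicator measurableSet_Icc _
    rw [hJ, ← ofReal_integral_eq_lintegral_ofReal (f := fun v : ℝ => 1 - |v|)
      ((continuous_const.sub continuous_abs).integrableOn_Icc) ?_]
    · rw [integral_one_sub_abs t ht0,
        Set.indicator_of_mem (by rw [Set.mem_Icc, ← abs_le]; exact hu), ht2]
    · filter_upwards [ae_restrict_mem measurableSet_Icc] with v hv
      have : |v| ≤ t := abs_le.mpr ⟨hv.1, hv.2⟩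
      simp only [Pi.zero_apply]
      linarith
  · push_neg at hu
    have hB : ∀ v, B2 r u v = 0 := by
      intro v
      simp only [B2, ite_eq_right_iff]
      intro h
      exfalso
      nlinarith [sq_abs u, sq_nonneg v, abs_nonneg u]
    have hJ : J2 r u = 0 := by
      unfold J2; simp [hB]
    rw [hJ, Set.indicator_of_notMem (by rw [Set.mem_Icc, ← abs_le]; exact not_le.mpr hu)]
    simp

lemma step3 (r : ℝ) (h0 : 0 ≤ r) (h1 : r ≤ 1) :
    ∫⁻ u : ℝ, ENNReal.ofReal (1 - |u|) * J2 r u =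
      ENNReal.ofReal (π * r^2 - 8/3 * r^3 + 1/2 * r^4) := by
  have hpt : ∀ u : ℝ, ENNReal.ofReal (1 - |u|) * J2 r u =
      ENNReal.ofReal ((Set.Icc (-r) r).indicator
        (fun u => (1 - |u|) * (2 * Real.sqrt (r^2 - u^2) - (r^2 - u^2))) u) := by
    intro u
    rw [J2_eq r h0 h1 u]
    by_cases hu : u ∈ Set.Icc (-r) r
    · rw [Set.indicator_of_mem hu, Set.indicator_of_mem hu, ← ENNReal.ofReal_mul]
      have h2 : |u| ≤ r := abs_le.mpr ⟨hu.1, hu.2⟩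
      linarith
    · rw [Set.indicator_of_notMem hu, Set.indicator_of_notMem hu]
      simp
  simp_rw [hpt]
  have hnn : ∀ u : ℝ, u ∈ Set.Icc (-r) r →
      0 ≤ (1 - |u|) * (2 * Real.sqrt (r^2 - u^2) - (r^2 - u^2)) := by
    intro u hu
    have h2 : |u| ≤ r := abs_le.mpr ⟨hu.1, hu.2⟩
    have hru : (0:ℝ) ≤ r^2 - u^2 := by nlinarith [abs_nonneg u, sq_abs u]
    have ht2 : Real.sqrt (r^2 - u^2) ^ 2 = r^2 - u^2 := Real.sq_sqrt hru
    have htr : Real.sqrt (r^2 - u^2) ≤ 1 := by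
      have h3 : Real.sqrt (r^2 - u^2) ≤ Real.sqrt (r^2) := Real.sqrt_le_sqrt (by nlinarith)
      rw [Real.sqrt_sq h0] at h3; linarith
    have ht0 : 0 ≤ Real.sqrt (r^2 - u^2) := Real.sqrt_nonneg _
    apply mul_nonneg (by linarith)
    nlinarith
  rw [← ofReal_integral_eq_lintegral_ofReal
    ((integrable_indicator_iff measurableSet_Icc).2 ((by fun_prop : Continuous fun u : ℝ =>
      (1 - |u|) * (2 * Real.sqrt (r^2 - u^2) - (r^2 - u^2))).integrableOn_Icc))
    (Filter.Eventually.of_forall (Set.indicator_nonneg hnn))]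
  congr 1
  rw [MeasureTheory.integral_indicator measurableSet_Icc,
    MeasureTheory.integral_Icc_eq_integral_Ioc,
    ← intervalIntegral.integral_of_le (by linarith : -r ≤ r), final_integral r h0]


open scoped ENNReal

lemma step2 (r : ℝ) :
    ∫⁻ z : (ℝ × ℝ) × (ℝ × ℝ), (I1 z.1.1 * I1 z.1.2) * ((I1 z.2.1 * I1 z.2.2) *
        B2 r (z.1.1 - z.2.1) (z.1.2 - z.2.2)) =
      ∫⁻ u : ℝ, ENNReal.ofReal (1 - |u|) * J2 r u := by
  have mB : Measurable fun z : (ℝ × ℝ) × (ℝ × ℝ) => B2 r (z.1.1 - z.2.1) (z.1.2 - z.2.2) :=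
    (measB2 r).comp ((measurable_fst.fst.sub measurable_snd.fst).prodMk
      (measurable_fst.snd.sub measurable_snd.snd))
  have F : Measurable fun z : (ℝ × ℝ) × (ℝ × ℝ) => (I1 z.1.1 * I1 z.1.2) *
      ((I1 z.2.1 * I1 z.2.2) * B2 r (z.1.1 - z.2.1) (z.1.2 - z.2.2)) :=
    ((measI1.comp measurable_fst.fst).mul (measI1.comp measurable_fst.snd)).mul
      (((measI1.comp measurable_snd.fst).mul (measI1.comp measurable_snd.snd)).mul mB)
  rw [Measure.volume_eq_prod, lintegral_prod _ F.aemeasurable, Measure.volume_eq_prod,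
    lintegral_prod _ F.lintegral_prod_right'.aemeasurable]
  have hinner : ∀ a b : ℝ, (∫⁻ q : ℝ × ℝ, (I1 a * I1 b) * ((I1 q.1 * I1 q.2) *
      B2 r (a - q.1) (b - q.2))) = ∫⁻ c : ℝ, ∫⁻ d : ℝ, (I1 a * I1 b) *
      ((I1 c * I1 d) * B2 r (a - c) (b - d)) := by
    intro a b
    rw [Measure.volume_eq_prod]
    exact lintegral_prod
      (fun q : ℝ × ℝ => I1 a * I1 b * (I1 q.1 * I1 q.2 * B2 r (a - q.1) (b - q.2)))
      ((F.comp (measurable_prodMk_left (x := ((a, b) : ℝ × ℝ)))).aemeasurable)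
  calc ∫⁻ a : ℝ, ∫⁻ b : ℝ, ∫⁻ q : ℝ × ℝ, (I1 a * I1 b) * ((I1 q.1 * I1 q.2) *
        B2 r (a - q.1) (b - q.2))
      = ∫⁻ a : ℝ, ∫⁻ b : ℝ, ∫⁻ c : ℝ, ∫⁻ d : ℝ, (I1 a * I1 b) *
        ((I1 c * I1 d) * B2 r (a - c) (b - d)) := by
        exact lintegral_congr fun a => lintegral_congr fun b => hinner a b
    _ = ∫⁻ a : ℝ, ∫⁻ c : ℝ, ∫⁻ b : ℝ, ∫⁻ d : ℝ, (I1 a * I1 b) *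
        ((I1 c * I1 d) * B2 r (a - c) (b - d)) := by
        refine lintegral_congr fun a => ?_
        refine lintegral_lintegral_swap ?_
        apply Measurable.aemeasurable
        apply Measurable.lintegral_prod_right'
          (f := fun q : (ℝ × ℝ) × ℝ => (I1 a * I1 q.1.1) *
            ((I1 q.1.2 * I1 q.2) * B2 r (a - q.1.2) (q.1.1 - q.2)))
        exact (measurable_const.mul (measI1.comp measurable_fst.fst)).mul
          (((measI1.comp measurable_fst.snd).mul (measI1.comp measurable_snd)).mul
            ((measB2 r).comp ((measurable_const.sub measurable_fst.snd).prodMk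
              (measurable_fst.fst.sub measurable_snd))))
    _ = ∫⁻ a : ℝ, ∫⁻ c : ℝ, I1 a * I1 c * J2 r (a - c) := by
        refine lintegral_congr fun a => lintegral_congr fun c => ?_
        have hre : ∀ b d : ℝ, (I1 a * I1 b) * ((I1 c * I1 d) * B2 r (a - c) (b - d)) =
            (I1 a * I1 c) * (I1 b * I1 d * B2 r (a - c) (b - d)) := fun b d => by ring
        simp_rw [hre]
        have hg : Measurable fun p : ℝ × ℝ => I1 p.1 * I1 p.2 * B2 r (a - c) (p.1 - p.2) :=
          ((measI1.comp measurable_fst).mul (measI1.comp measurable_snd)).mul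
            ((measB2 r).comp (measurable_const.prodMk (measurable_fst.sub measurable_snd)))
        have hpull : ∀ b : ℝ, (∫⁻ d : ℝ, (I1 a * I1 c) *
            (I1 b * I1 d * B2 r (a - c) (b - d))) = (I1 a * I1 c) *
            ∫⁻ d : ℝ, I1 b * I1 d * B2 r (a - c) (b - d) := by
          intro b
          exact lintegral_const_mul _ (hg.comp (measurable_prodMk_left (x := b)))
        simp_rw [hpull]
        rw [lintegral_const_mul _ (Measurable.lintegral_prod_right'
          (f := fun p : ℝ × ℝ => I1 p.1 * I1 p.2 * B2 r (a - c) (p.1 - p.2)) hg)]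
        rw [diff_lemma (fun v => B2 r (a - c) v)
          ((measB2 r).comp (measurable_prodMk_left (x := a - c)))]
        rfl
    _ = ∫⁻ u : ℝ, ENNReal.ofReal (1 - |u|) * J2 r u := diff_lemma (J2 r) (measJ2 r)

/-- For `0 ≤ r ≤ 1`, the 4-dimensional Lebesgue measure of the set of pairs of points of
the unit square `[0,1]² ⊂ ℝ²` lying within Euclidean distance `r` of each other equals
`π r² − (8/3) r³ + (1/2) r⁴`.  Equivalently, this is the probability that two independent
uniform points of the unit square are at distance at most `r`. -/
theorem volume_pairs_unitSquare_dist_le (r : ℝ) (h0 : 0 ≤ r) (h1 : r ≤ 1) :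
    volume {p : EuclideanSpace ℝ (Fin 2) × EuclideanSpace ℝ (Fin 2) |
        (∀ i, p.1 i ∈ Set.Icc (0 : ℝ) 1) ∧ (∀ i, p.2 i ∈ Set.Icc (0 : ℝ) 1) ∧
          dist p.1 p.2 ≤ r} =
      ENNReal.ofReal (π * r ^ 2 - 8 / 3 * r ^ 3 + 1 / 2 * r ^ 4) := by
  classical
  set T : Set ((ℝ × ℝ) × (ℝ × ℝ)) :=
    ((Set.Icc (0:ℝ) 1 ×ˢ Set.Icc (0:ℝ) 1) ×ˢ (Set.Icc (0:ℝ) 1 ×ˢ Set.Icc (0:ℝ) 1)) ∩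
      {q : (ℝ × ℝ) × (ℝ × ℝ) | (q.1.1 - q.2.1)^2 + (q.1.2 - q.2.2)^2 ≤ r^2} with hTdef
  have hTmeas : MeasurableSet T :=
    (((measurableSet_Icc.prod measurableSet_Icc).prod
      (measurableSet_Icc.prod measurableSet_Icc))).inter
      ((isClosed_le (by fun_prop) continuous_const).measurableSet)
  have hstep1 : volume {p : EuclideanSpace ℝ (Fin 2) × EuclideanSpace ℝ (Fin 2) |
      (∀ i, p.1 i ∈ Set.Icc (0 : ℝ) 1) ∧ (∀ i, p.2 i ∈ Set.Icc (0 : ℝ) 1) ∧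
        dist p.1 p.2 ≤ r} = volume T := by
    set Φ : EuclideanSpace ℝ (Fin 2) ≃ᵐ ℝ × ℝ :=
      (MeasurableEquiv.toLp 2 (Fin 2 → ℝ)).symm.trans
        (MeasurableEquiv.piFinTwo fun _ => ℝ) with hΦdef
    have hΦ : MeasurePreserving Φ volume volume :=
      (volume_preserving_piFinTwo fun _ => ℝ).comp
        (EuclideanSpace.volume_preserving_symm_measurableEquiv_toLp (Fin 2))
    have hΨ : MeasurePreserving (Prod.map Φ Φ) volume volume := by
      rw [Measure.volume_eq_prod, Measure.volume_eq_prod]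
      exact hΦ.prod hΦ
    have hpre : {p : EuclideanSpace ℝ (Fin 2) × EuclideanSpace ℝ (Fin 2) |
        (∀ i, p.1 i ∈ Set.Icc (0 : ℝ) 1) ∧ (∀ i, p.2 i ∈ Set.Icc (0 : ℝ) 1) ∧
          dist p.1 p.2 ≤ r} = (Prod.map Φ Φ) ⁻¹' T := by
      ext ⟨x, y⟩
      have hΦx : ∀ v : EuclideanSpace ℝ (Fin 2), Φ v = (v 0, v 1) := fun v => rfl
      have hdist : dist x y ≤ r ↔ (x 0 - y 0)^2 + (x 1 - y 1)^2 ≤ r^2 := by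
        rw [EuclideanSpace.dist_eq, Real.sqrt_le_left h0]
        simp [Fin.sum_univ_two, Real.dist_eq, sq_abs]
      simp only [Set.mem_setOf_eq, Set.mem_preimage, Prod.map, hΦx, hTdef,
        Set.mem_inter_iff, Set.mem_prod, Fin.forall_fin_two, hdist]
      tauto
    rw [hpre, hΨ.measure_preimage hTmeas.nullMeasurableSet]
  rw [hstep1]
  have hfact : ∀ z : (ℝ × ℝ) × (ℝ × ℝ), T.indicator (1 : ((ℝ × ℝ) × (ℝ × ℝ)) → ℝ≥0∞) z =
      (I1 z.1.1 * I1 z.1.2) * ((I1 z.2.1 * I1 z.2.2) *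
        B2 r (z.1.1 - z.2.1) (z.1.2 - z.2.2)) := by
    rintro ⟨⟨a, b⟩, ⟨c, d⟩⟩
    have hmem : (((a, b), (c, d)) : (ℝ × ℝ) × (ℝ × ℝ)) ∈ T ↔
        (a ∈ Set.Icc (0:ℝ) 1 ∧ b ∈ Set.Icc (0:ℝ) 1) ∧
          (c ∈ Set.Icc (0:ℝ) 1 ∧ d ∈ Set.Icc (0:ℝ) 1) ∧
          (a - c)^2 + (b - d)^2 ≤ r^2 := by
      rw [hTdef]
      simp only [Set.mem_inter_iff, Set.mem_prod, Set.mem_setOf_eq]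
      tauto
    have hI : ∀ x : ℝ, I1 x = if x ∈ Set.Icc (0:ℝ) 1 then 1 else 0 :=
      fun x => Set.indicator_apply _ _ _
    rw [Set.indicator_apply]
    simp only [hmem, hI, B2, Pi.one_apply]
    by_cases h1 : a ∈ Set.Icc (0:ℝ) 1 <;> by_cases h2 : b ∈ Set.Icc (0:ℝ) 1 <;>
      by_cases h3 : c ∈ Set.Icc (0:ℝ) 1 <;> by_cases h4 : d ∈ Set.Icc (0:ℝ) 1 <;>
      by_cases h5 : (a - c)^2 + (b - d)^2 ≤ r^2 <;>
      simp [h1, h2, h3, h4, h5]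
  rw [← lintegral_indicator_one hTmeas]
  calc ∫⁻ z, T.indicator (1 : ((ℝ × ℝ) × (ℝ × ℝ)) → ℝ≥0∞) z
      = ∫⁻ z : (ℝ × ℝ) × (ℝ × ℝ), (I1 z.1.1 * I1 z.1.2) * ((I1 z.2.1 * I1 z.2.2) *
        B2 r (z.1.1 - z.2.1) (z.1.2 - z.2.2)) := lintegral_congr hfact
    _ = ∫⁻ u : ℝ, ENNReal.ofReal (1 - |u|) * J2 r u := step2 r
    _ = ENNReal.ofReal (π * r ^ 2 - 8 / 3 * r ^ 3 + 1 / 2 * r ^ 4) := step3 r h0 h1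
end

section
/- For every real r with 1 ≤ r ≤ √2, the 4-dimensional Lebesgue measure of the set {(x, y) ∈ [0,1]² × [0,1]² : dist(x, y) ≤ r} equals 1/3 − 2r²(1 − arcsin(1/r) + arccos(1/r)) + (4/3)(2r² + 1)√(r² − 1) − (1/2) r⁴; equivalently, this is the probability that two independent uniform points of the unit square lie within Euclidean distance r of each other. -/
open MeasureTheory Real


lemma posPart_sq_hasDerivAt (c a : ℝ) :
    HasDerivAt (fun x => max (x - c) 0 ^ 2) (2 * max (a - c) 0) a := by
  rcases lt_trichotomy a c with h | h | h
  · have : (fun x => max (x - c) 0 ^ 2) =ᶠ[nhds a] fun _ => (0:ℝ) := by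
      filter_upwards [eventually_lt_nhds h] with x hx
      simp [max_eq_right (by linarith : x - c ≤ 0)]
    rw [max_eq_right (by linarith : a - c ≤ 0), mul_zero]
    exact (hasDerivAt_const a (0:ℝ)).congr_of_eventuallyEq this
  · subst h
    rw [sub_self, max_self, mul_zero]
    rw [hasDerivAt_iff_isLittleO]
    rw [Asymptotics.isLittleO_iff]
    intro ε hε
    filter_upwards [Metric.ball_mem_nhds a hε] with x hx
    have hx' : |x - a| < ε := by simpa [Real.dist_eq] using hx
    have h1 : max (x - a) 0 ≤ |x - a| := max_le (le_abs_self _) (abs_nonneg _)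
    have h2 : (0:ℝ) ≤ max (x - a) 0 := le_max_right _ _
    have key : ‖max (x - a) 0 ^ 2 - max (a - a) 0 ^ 2 - (x - a) • (0:ℝ)‖
        = max (x - a) 0 * max (x - a) 0 := by
      simp only [sub_self, max_self, smul_zero, sub_zero, ne_eq, OfNat.ofNat_ne_zero,
        not_false_eq_true, zero_pow, sq, mul_zero, sub_zero]
      exact abs_of_nonneg (mul_nonneg h2 h2)
    rw [key]
    calc max (x - a) 0 * max (x - a) 0
        ≤ ε * |x - a| := mul_le_mul (le_of_lt (lt_of_le_of_lt h1 hx')) h1 h2 hε.le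
      _ = ε * ‖x - a‖ := rfl
  · have : (fun x => max (x - c) 0 ^ 2) =ᶠ[nhds a] fun x => (x - c) ^ 2 := by
      filter_upwards [eventually_gt_nhds h] with x hx
      simp [max_eq_left (by linarith : (0:ℝ) ≤ x - c)]
    rw [max_eq_left (by linarith : (0:ℝ) ≤ a - c)]
    have h' : HasDerivAt (fun x : ℝ => (x - c) ^ 2) (2 * (a - c)) a := by
      simpa using ((hasDerivAt_id a).sub_const c).fun_pow 2
    exact h'.congr_of_eventuallyEq this

lemma continuous_posPart' (c : ℝ) : Continuous (fun x : ℝ => max (x - c) 0) :=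
  (continuous_id.sub continuous_const).max continuous_const

lemma integral_posPart (c : ℝ) :
    ∫ a in (0:ℝ)..1, max (a - c) 0 = max (1 - c) 0 ^ 2 / 2 - max (0 - c) 0 ^ 2 / 2 := by
  have h := intervalIntegral.integral_eq_sub_of_hasDerivAt
    (f := fun x => max (x - c) 0 ^ 2) (f' := fun x => 2 * max (x - c) 0)
    (a := 0) (b := 1)
    (fun x _ => posPart_sq_hasDerivAt c x)
    (((continuous_const.mul (continuous_posPart' c)).intervalIntegrable 0 1))
  have h2 : ∫ a in (0:ℝ)..1, 2 * max (a - c) 0 = 2 * ∫ a in (0:ℝ)..1, max (a - c) 0 :=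
    intervalIntegral.integral_const_mul 2 _
  rw [h2] at h
  linarith [h]

lemma strip_slice (t a : ℝ) (ha : a ∈ Set.Icc (0:ℝ) 1) :
    {b : ℝ | b ∈ Set.Icc (0:ℝ) 1 ∧ |a - b| ≤ t}
      = Set.Icc (max 0 (a - t)) (min 1 (a + t)) := by
  ext b
  simp only [Set.mem_setOf_eq, Set.mem_Icc, abs_sub_le_iff, max_le_iff, le_min_iff]
  constructor
  · rintro ⟨⟨hb0, hb1⟩, hab, hba⟩
    refine ⟨⟨hb0, by linarith⟩, hb1, by linarith⟩
  · rintro ⟨⟨hb0, hab⟩, hb1, hba⟩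
    exact ⟨⟨hb0, hb1⟩, by linarith, by linarith⟩

lemma volume_strip (t : ℝ) (ht : 0 ≤ t) :
    volume {q : ℝ × ℝ | q.1 ∈ Set.Icc (0:ℝ) 1 ∧ q.2 ∈ Set.Icc (0:ℝ) 1 ∧ |q.1 - q.2| ≤ t}
      = ENNReal.ofReal (1 - max (1 - t) 0 ^ 2) := by
  set S := {q : ℝ × ℝ | q.1 ∈ Set.Icc (0:ℝ) 1 ∧ q.2 ∈ Set.Icc (0:ℝ) 1 ∧ |q.1 - q.2| ≤ t}
    with hSdef
  have hS : MeasurableSet S := by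
    have : S = (Set.Icc (0:ℝ) 1 ×ˢ Set.Icc (0:ℝ) 1) ∩ {q : ℝ × ℝ | |q.1 - q.2| ≤ t} := by
      ext ⟨x, y⟩
      simp only [hSdef, Set.mem_setOf_eq, Set.mem_inter_iff, Set.mem_prod]
      tauto
    rw [this]
    exact (measurableSet_Icc.prod measurableSet_Icc).inter
      (isClosed_le ((continuous_fst.sub continuous_snd).abs) continuous_const).measurableSet
  rw [Measure.volume_eq_prod, Measure.prod_apply hS]
  have hpre : ∀ a : ℝ, volume (Prod.mk a ⁻¹' S)
      = Set.indicator (Set.Icc (0:ℝ) 1)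
          (fun a => ENNReal.ofReal (min 1 (a + t) - max 0 (a - t))) a := by
    intro a
    by_cases ha : a ∈ Set.Icc (0:ℝ) 1
    · rw [Set.indicator_of_mem ha]
      have : Prod.mk a ⁻¹' S = {b : ℝ | b ∈ Set.Icc (0:ℝ) 1 ∧ |a - b| ≤ t} := by
        ext b; simp only [hSdef, Set.mem_preimage, Set.mem_setOf_eq, ha, true_and]
      rw [this, strip_slice t a ha, Real.volume_Icc]
    · rw [Set.indicator_of_notMem ha]
      have : Prod.mk a ⁻¹' S = ∅ := by
        ext b
        simp only [hSdef, Set.mem_preimage, Set.mem_setOf_eq, Set.mem_empty_iff_false, iff_false]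
        intro h; exact ha h.1
      simp [this]
  simp_rw [hpre]
  rw [lintegral_indicator measurableSet_Icc]
  have hcont : Continuous (fun a : ℝ => min 1 (a + t) - max 0 (a - t)) := by
    exact (continuous_const.min (continuous_id.add continuous_const)).sub
      (continuous_const.max (continuous_id.sub continuous_const))
  have hnn : ∀ a ∈ Set.Icc (0:ℝ) 1, 0 ≤ min 1 (a + t) - max 0 (a - t) := by
    rintro a ⟨ha0, ha1⟩
    have h1 : max 0 (a - t) ≤ a := max_le ha0 (by linarith)
    have h2 : a ≤ min 1 (a + t) := le_min ha1 (by linarith)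
    linarith
  rw [← ofReal_integral_eq_lintegral_ofReal
      (hcont.integrableOn_Icc.mono_measure (le_refl _))
      ((ae_restrict_iff' measurableSet_Icc).mpr (Filter.Eventually.of_forall hnn))]
  congr 1
  rw [integral_Icc_eq_integral_Ioc, ← intervalIntegral.integral_of_le (by norm_num : (0:ℝ) ≤ 1)]
  have hrw : ∀ a : ℝ, min 1 (a + t) - max 0 (a - t)
      = (a + t) - max (a - (1 - t)) 0 - max (a - t) 0 := by
    intro a
    have m1 : min 1 (a + t) = (a + t) - max (a - (1 - t)) 0 := by
      rcases le_total (a + t) 1 with h | h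
      · rw [min_eq_right h, max_eq_right (by linarith)]; ring
      · rw [min_eq_left h, max_eq_left (by linarith)]; ring
    rw [m1, max_comm (0:ℝ) (a - t)]
  simp_rw [hrw]
  have i1 : IntervalIntegrable (fun a : ℝ => a + t) volume 0 1 :=
    (continuous_id.add continuous_const).intervalIntegrable 0 1
  have i2 : IntervalIntegrable (fun a : ℝ => max (a - (1 - t)) 0) volume 0 1 :=
    (continuous_posPart' (1 - t)).intervalIntegrable 0 1
  have i3 : IntervalIntegrable (fun a : ℝ => max (a - t) 0) volume 0 1 :=
    (continuous_posPart' t).intervalIntegrable 0 1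
  rw [intervalIntegral.integral_sub (i1.sub i2) i3, intervalIntegral.integral_sub i1 i2,
    integral_posPart, integral_posPart]
  have e1 : ∫ a in (0:ℝ)..1, (a + t) = 1 / 2 + t := by
    rw [intervalIntegral.integral_add intervalIntegral.intervalIntegrable_id
      (intervalIntegrable_const)]
    simp
  rw [e1]
  have hmax0 : max (0 - t) 0 = 0 := max_eq_right (by linarith)
  have hmaxt : max (0 - (1 - t)) 0 ^ 2 = max (t - 1) 0 ^ 2 := by
    rcases le_total t 1 with h | h
    · rw [max_eq_right (by linarith), max_eq_right (by linarith)]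
    · rw [max_eq_left (by linarith), max_eq_left (by linarith)]; ring
  have hmax1 : max (1 - (1 - t)) 0 = t := by rw [max_eq_left (by linarith)]; ring
  rw [hmax0, hmaxt, hmax1]
  rcases le_total t 1 with h | h
  · rw [max_eq_right (by linarith : t - 1 ≤ 0), max_eq_left (by linarith : 0 ≤ 1 - t)]
    ring
  · rw [max_eq_left (by linarith : 0 ≤ t - 1), max_eq_right (by linarith : 1 - t ≤ 0)]
    ring

lemma double_integral_reduce (g : ℝ → ℝ) (hc : Continuous g) (he : ∀ v, g (-v) = g v) :
    ∫ x in (0:ℝ)..1, ∫ y in (0:ℝ)..1, g (x - y) = 2 * ∫ u in (0:ℝ)..1, (1 - u) * g u := by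
  set Γ : ℝ → ℝ := fun x => ∫ u in (0:ℝ)..x, g u with hΓ
  have hΓd : ∀ x : ℝ, HasDerivAt Γ (g x) x := by
    intro x
    exact intervalIntegral.integral_hasDerivAt_right (hc.intervalIntegrable 0 x)
      (hc.stronglyMeasurable.stronglyMeasurableAtFilter) hc.continuousAt
  have hΓc : Continuous Γ := by
    rw [continuous_iff_continuousAt]; exact fun x => (hΓd x).continuousAt
  have hodd : ∀ z : ℝ, Γ (-z) = -Γ z := by
    intro z
    have h1 : ∫ u in (0:ℝ)..z, g (-u) = ∫ u in (-z)..(-0:ℝ), g u :=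
      intervalIntegral.integral_comp_neg g
    have h2 : ∫ u in (0:ℝ)..z, g (-u) = Γ z := by
      simp only [hΓ]; exact intervalIntegral.integral_congr (fun u _ => he u)
    rw [h2] at h1
    have h3 : ∫ u in (-z)..(-0:ℝ), g u = -∫ u in (-0:ℝ)..(-z), g u :=
      intervalIntegral.integral_symm _ _
    rw [h3] at h1
    simp only [neg_zero] at h1
    simp only [hΓ]
    linarith
  have inner : ∀ x : ℝ, ∫ y in (0:ℝ)..1, g (x - y) = Γ x + Γ (1 - x) := by
    intro x
    have h1 : ∫ y in (0:ℝ)..1, g (x - y) = ∫ u in (x - 1)..(x - 0), g u :=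
      intervalIntegral.integral_comp_sub_left g x
    have h2 : (∫ u in (0:ℝ)..x, g u) - ∫ u in (0:ℝ)..(x-1), g u = ∫ u in (x-1)..x, g u :=
      intervalIntegral.integral_interval_sub_left (hc.intervalIntegrable 0 x)
        (hc.intervalIntegrable 0 (x-1))
    have h3 : Γ (x - 1) = -Γ (1 - x) := by
      have := hodd (1 - x); rw [show -(1-x) = x - 1 by ring] at this; linarith
    rw [h1, sub_zero, ← h2]
    have : (∫ u in (0:ℝ)..(x-1), g u) = Γ (x-1) := rfl
    rw [this, h3]
    simp only [hΓ]
    ring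
  rw [intervalIntegral.integral_congr (fun x _ => inner x)]
  have ig2 : IntervalIntegrable (fun x : ℝ => Γ (1 - x)) volume 0 1 :=
    (hΓc.comp (by fun_prop : Continuous fun x : ℝ => 1 - x)).intervalIntegrable 0 1
  rw [intervalIntegral.integral_add (hΓc.intervalIntegrable 0 1) ig2]
  have h4 : ∫ x in (0:ℝ)..1, Γ (1 - x) = ∫ x in (0:ℝ)..1, Γ x := by
    have := intervalIntegral.integral_comp_sub_left Γ 1 (a := 0) (b := 1)
    simpa using this
  rw [h4]
  have hibp : ∫ x in (0:ℝ)..1, Γ x * 1 = Γ 1 * 1 - Γ 0 * 0 - ∫ x in (0:ℝ)..1, g x * x := by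
    exact intervalIntegral.integral_mul_deriv_eq_deriv_mul
      (fun x _ => hΓd x) (fun x _ => hasDerivAt_id x)
      (hc.intervalIntegrable 0 1) (continuous_const.intervalIntegrable 0 1)
  have hΓ0 : Γ 0 = 0 := intervalIntegral.integral_same
  have hΓint : ∫ x in (0:ℝ)..1, Γ x * 1 = ∫ x in (0:ℝ)..1, Γ x := by
    simp
  rw [hΓint] at hibp
  have h5 : ∫ u in (0:ℝ)..1, (1 - u) * g u
      = (∫ u in (0:ℝ)..1, g u) - ∫ u in (0:ℝ)..1, g u * u := by
    have ig3 : IntervalIntegrable (fun u : ℝ => g u * u) volume 0 1 :=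
      (by fun_prop : Continuous fun u : ℝ => g u * u).intervalIntegrable 0 1
    rw [← intervalIntegral.integral_sub (hc.intervalIntegrable 0 1) ig3]
    exact intervalIntegral.integral_congr (fun u _ => by ring)
  rw [h5]
  have : Γ 1 = ∫ u in (0:ℝ)..1, g u := rfl
  rw [hibp, hΓ0, this]
  ring


section
variable (r : ℝ)

lemma sqrt_deriv_aux (u : ℝ) (hpos : 0 < r^2 - u^2) :
    HasDerivAt (fun x : ℝ => Real.sqrt (r^2 - x^2))
      (-u / Real.sqrt (r^2 - u^2)) u := by
  have hinner : HasDerivAt (fun x : ℝ => r^2 - x^2) (-(2*u)) u := by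
    simpa using (hasDerivAt_const u (r^2)).fun_sub ((hasDerivAt_pow 2 u))
  have h := (Real.hasDerivAt_sqrt (ne_of_gt hpos)).comp u hinner
  refine h.congr_deriv ?_
  have ht0 : 0 < Real.sqrt (r^2 - u^2) := Real.sqrt_pos.mpr hpos
  field_simp

lemma Phi_hasDerivAt (h1 : 1 ≤ r) (u : ℝ) (hu0 : 0 ≤ u) (hu1 : u < 1) :
    HasDerivAt (fun x : ℝ => x * Real.sqrt (r^2 - x^2) + r^2 * Real.arcsin (x/r)
        + 2/3 * ((r^2 - x^2) * Real.sqrt (r^2 - x^2)) - r^2*x + x^3/3 + r^2*x^2/2 - x^4/4)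
      ((1 - u) * (2 * Real.sqrt (r^2 - u^2) - (r^2 - u^2))) u := by
  have hr0 : 0 < r := lt_of_lt_of_le one_pos h1
  have hpos : 0 < r^2 - u^2 := by nlinarith
  have ht0 : 0 < Real.sqrt (r^2 - u^2) := Real.sqrt_pos.mpr hpos
  have ht2 : Real.sqrt (r^2 - u^2) ^ 2 = r^2 - u^2 := Real.sq_sqrt hpos.le
  have hsq := sqrt_deriv_aux r u hpos
  have hA1 : HasDerivAt (fun x : ℝ => x * Real.sqrt (r^2 - x^2))
      (Real.sqrt (r^2 - u^2) + u * (-u / Real.sqrt (r^2 - u^2))) u := by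
    simpa using (hasDerivAt_id u).fun_mul hsq
  have harc : HasDerivAt (fun x : ℝ => Real.arcsin (x/r))
      ((1 / Real.sqrt (1 - (u/r)^2)) * (1/r)) u := by
    have hne1 : u/r ≠ 1 := by
      intro h
      have : u = r := by field_simp at h; linarith
      nlinarith
    have hne2 : u/r ≠ -1 := by
      intro h
      have : u = -r := by field_simp at h; linarith
      nlinarith
    have hdiv : HasDerivAt (fun x : ℝ => x/r) (1/r) u := by
      simpa using (hasDerivAt_id u).div_const r
    exact (Real.hasDerivAt_arcsin hne2 hne1).comp u hdiv
  have hsimp : Real.sqrt (1 - (u/r)^2) = Real.sqrt (r^2 - u^2) / r := by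
    rw [show (1:ℝ) - (u/r)^2 = (r^2 - u^2)/r^2 by field_simp,
      Real.sqrt_div hpos.le, Real.sqrt_sq hr0.le]
  rw [hsimp] at harc
  have hA2 : HasDerivAt (fun x : ℝ => r^2 * Real.arcsin (x/r))
      (r^2 * ((1 / (Real.sqrt (r^2 - u^2) / r)) * (1/r))) u := harc.const_mul (r^2)
  have hA3 : HasDerivAt (fun x : ℝ => 2/3 * ((r^2 - x^2) * Real.sqrt (r^2 - x^2)))
      (2/3 * ((-(2*u)) * Real.sqrt (r^2 - u^2) + (r^2 - u^2) * (-u / Real.sqrt (r^2 - u^2)))) u := by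
    have hinner : HasDerivAt (fun x : ℝ => r^2 - x^2) (-(2*u)) u := by
      simpa using (hasDerivAt_const u (r^2)).fun_sub ((hasDerivAt_pow 2 u))
    exact (hinner.mul hsq).const_mul (2/3)
  have hA4 : HasDerivAt (fun x : ℝ => r^2 * x) (r^2) u := by
    simpa using (hasDerivAt_id u).const_mul (r^2)
  have hA5 : HasDerivAt (fun x : ℝ => x^3/3) (u^2) u := by
    simpa using (hasDerivAt_pow 3 u).div_const 3
  have hA6 : HasDerivAt (fun x : ℝ => r^2 * x^2/2) (r^2 * u) u := by
    have := ((hasDerivAt_pow 2 u).const_mul (r^2)).div_const 2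
    refine this.congr_deriv ?_
    ring
  have hA7 : HasDerivAt (fun x : ℝ => x^4/4) (u^3) u := by
    simpa using (hasDerivAt_pow 4 u).div_const 4
  have htot := ((((((hA1.add hA2).add hA3).sub hA4).add hA5).add hA6).sub hA7)
  refine htot.congr_deriv ?_
  have hkey : Real.sqrt (r^2 - u^2) * Real.sqrt (r^2 - u^2) = r^2 - u^2 := by
    rw [← sq]; exact ht2
  field_simp
  linear_combination (2*u - 3) * ht2

end

lemma calc_main (r : ℝ) (h1 : 1 ≤ r) (h2 : r ≤ Real.sqrt 2) :
    2 * ∫ u in (0:ℝ)..1, (1 - u) * (1 - max (1 - Real.sqrt (r^2 - u^2)) 0 ^ 2)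
      = 1 / 3 - 2 * r ^ 2 * (1 - arcsin (1 / r) + arccos (1 / r))
        + 4 / 3 * (2 * r ^ 2 + 1) * Real.sqrt (r ^ 2 - 1) - 1 / 2 * r ^ 4 := by
  have hr0 : 0 < r := lt_of_lt_of_le one_pos h1
  have hr21 : 1 ≤ r^2 := by nlinarith
  have hr22 : r^2 ≤ 2 := by
    have := Real.sq_sqrt (by norm_num : (0:ℝ) ≤ 2)
    nlinarith [Real.sqrt_nonneg 2]
  set s := Real.sqrt (r^2 - 1) with hsdef
  have hs2 : s^2 = r^2 - 1 := Real.sq_sqrt (by linarith)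
  have hs0 : 0 ≤ s := Real.sqrt_nonneg _
  have hs1 : s ≤ 1 := by nlinarith
  have c1 : Continuous fun x : ℝ => Real.sqrt (r^2 - x^2) :=
    (continuous_const.sub (continuous_pow 2)).sqrt
  have c2 : Continuous fun x : ℝ => Real.arcsin (x/r) :=
    Real.continuous_arcsin.comp (continuous_id.div_const r)
  have hgc : Continuous (fun u : ℝ => (1 - u) * (1 - max (1 - Real.sqrt (r^2 - u^2)) 0 ^ 2)) :=
    (continuous_const.sub continuous_id).mul
      (continuous_const.sub (((continuous_const.sub c1).max continuous_const).pow 2))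
  have hsplit : ∫ u in (0:ℝ)..1, (1 - u) * (1 - max (1 - Real.sqrt (r^2 - u^2)) 0 ^ 2)
      = (∫ u in (0:ℝ)..s, (1 - u) * (1 - max (1 - Real.sqrt (r^2 - u^2)) 0 ^ 2))
        + ∫ u in s..1, (1 - u) * (1 - max (1 - Real.sqrt (r^2 - u^2)) 0 ^ 2) :=
    (intervalIntegral.integral_add_adjacent_intervals
      (hgc.intervalIntegrable 0 s) (hgc.intervalIntegrable s 1)).symm
  have piece1 : ∫ u in (0:ℝ)..s, (1 - u) * (1 - max (1 - Real.sqrt (r^2 - u^2)) 0 ^ 2)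
      = s - s^2/2 := by
    have hcongr : ∀ u ∈ Set.uIcc (0:ℝ) s,
        (1 - u) * (1 - max (1 - Real.sqrt (r^2 - u^2)) 0 ^ 2) = 1 - u := by
      intro u hu
      rw [Set.uIcc_of_le hs0] at hu
      obtain ⟨hu0, hus⟩ := hu
      have h1le : 1 ≤ Real.sqrt (r^2 - u^2) := by
        rw [show (1:ℝ) = Real.sqrt 1 by rw [Real.sqrt_one]]
        apply Real.sqrt_le_sqrt
        nlinarith
      rw [max_eq_right (by linarith)]
      ring
    rw [intervalIntegral.integral_congr hcongr,
      intervalIntegral.integral_sub intervalIntegrable_const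
        intervalIntegral.intervalIntegrable_id]
    simp
    try ring
  have piece2 : ∫ u in s..1, (1 - u) * (1 - max (1 - Real.sqrt (r^2 - u^2)) 0 ^ 2)
      = (1*Real.sqrt (r^2 - 1^2) + r^2 * Real.arcsin (1/r)
          + 2/3 * ((r^2 - 1^2) * Real.sqrt (r^2 - 1^2)) - r^2*1 + 1^3/3 + r^2*1^2/2 - 1^4/4)
        - (s*Real.sqrt (r^2 - s^2) + r^2 * Real.arcsin (s/r)
          + 2/3 * ((r^2 - s^2) * Real.sqrt (r^2 - s^2)) - r^2*s + s^3/3 + r^2*s^2/2 - s^4/4) := by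
    have hcongr : ∀ u ∈ Set.uIcc s 1,
        (1 - u) * (1 - max (1 - Real.sqrt (r^2 - u^2)) 0 ^ 2)
          = (1 - u) * (2 * Real.sqrt (r^2 - u^2) - (r^2 - u^2)) := by
      intro u hu
      rw [Set.uIcc_of_le hs1] at hu
      obtain ⟨hsu, hu1⟩ := hu
      have hu0 : 0 ≤ u := le_trans hs0 hsu
      have hnn : 0 ≤ r^2 - u^2 := by nlinarith
      have hle1 : Real.sqrt (r^2 - u^2) ≤ 1 := by
        rw [show (1:ℝ) = Real.sqrt 1 by rw [Real.sqrt_one]]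
        exact Real.sqrt_le_sqrt (by nlinarith)
      have ht2 : Real.sqrt (r^2 - u^2) ^ 2 = r^2 - u^2 := Real.sq_sqrt hnn
      rw [max_eq_left (by linarith)]
      linear_combination (u - 1) * ht2
    rw [intervalIntegral.integral_congr hcongr]
    have hΦc : Continuous (fun x : ℝ => x * Real.sqrt (r^2 - x^2) + r^2 * Real.arcsin (x/r)
        + 2/3 * ((r^2 - x^2) * Real.sqrt (r^2 - x^2)) - r^2*x + x^3/3 + r^2*x^2/2 - x^4/4) :=
      ((((((continuous_id.mul c1).add (continuous_const.mul c2)).add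
        (continuous_const.mul ((continuous_const.sub (continuous_pow 2)).mul c1))).sub
        (continuous_const.mul continuous_id)).add ((continuous_pow 3).div_const 3)).add
        ((continuous_const.mul (continuous_pow 2)).div_const 2)).sub
        ((continuous_pow 4).div_const 4)
    have hic : Continuous fun u : ℝ => (1 - u) * (2 * Real.sqrt (r^2 - u^2) - (r^2 - u^2)) :=
      (continuous_const.sub continuous_id).mul
        ((continuous_const.mul c1).sub (continuous_const.sub (continuous_pow 2)))
    exact intervalIntegral.integral_eq_sub_of_hasDeriv_right_of_le hs1
      hΦc.continuousOn
      (fun x hx => (Phi_hasDerivAt r h1 x (le_trans hs0 hx.1.le) hx.2).hasDerivWithinAt)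
      (hic.intervalIntegrable s 1)
  have hsv1 : Real.sqrt (r^2 - 1^2) = s := by norm_num [hsdef]
  have hsv2 : Real.sqrt (r^2 - s^2) = 1 := by
    rw [show r^2 - s^2 = 1 by linarith [hs2]]
    exact Real.sqrt_one
  have harc : Real.arcsin (s/r) = π/2 - Real.arcsin (1/r) := by
    have h0 : (0:ℝ) ≤ 1/r := by positivity
    have ha1 : Real.arccos (1/r) = Real.arcsin (Real.sqrt (1 - (1/r)^2)) :=
      Real.arccos_eq_arcsin h0
    have ha2 : Real.sqrt (1 - (1/r)^2) = s/r := by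
      rw [show (1:ℝ) - (1/r)^2 = (r^2 - 1)/r^2 by field_simp,
        Real.sqrt_div (by linarith) , Real.sqrt_sq hr0.le]
    rw [ha2] at ha1
    rw [← ha1, Real.arccos_eq_pi_div_two_sub_arcsin]
  rw [hsplit, piece1, piece2, hsv1, hsv2, harc, Real.arccos_eq_pi_div_two_sub_arcsin]
  linear_combination (s^2/2 - 2/3*s - 1/6 - r^2/2) * hs2


lemma mp_regroup :
    MeasurePreserving (fun p : (ℝ×ℝ)×(ℝ×ℝ) => ((p.1.1, p.2.1), (p.1.2, p.2.2)))
      (volume : Measure ((ℝ×ℝ)×(ℝ×ℝ))) volume := by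
  have h1 := MeasureTheory.volume_preserving_prodAssoc (α₁ := ℝ) (β₁ := ℝ) (γ₁ := ℝ×ℝ)
  have hA := MeasureTheory.volume_preserving_prodAssoc (α₁ := ℝ) (β₁ := ℝ) (γ₁ := ℝ)
  have hswap : MeasurePreserving (Prod.swap : ℝ×ℝ → ℝ×ℝ) volume volume :=
    Measure.measurePreserving_swap
  have h2 : MeasurePreserving
      (Prod.map (id : ℝ → ℝ) (MeasurableEquiv.prodAssoc.symm : ℝ×(ℝ×ℝ) ≃ᵐ (ℝ×ℝ)×ℝ))
      volume volume :=
    (MeasurePreserving.id volume).prod (MeasurePreserving.symm _ hA)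
  have h3 : MeasurePreserving
      (Prod.map (id : ℝ → ℝ) (Prod.map (Prod.swap : ℝ×ℝ → ℝ×ℝ) (id : ℝ → ℝ)))
      volume volume :=
    (MeasurePreserving.id volume).prod (hswap.prod (MeasurePreserving.id volume))
  have h4 : MeasurePreserving
      (Prod.map (id : ℝ → ℝ) (MeasurableEquiv.prodAssoc : (ℝ×ℝ)×ℝ ≃ᵐ ℝ×(ℝ×ℝ)))
      volume volume :=
    (MeasurePreserving.id volume).prod hA
  exact (((((MeasurePreserving.symm _ h1).comp h4).comp h3).comp h2).comp h1 : _)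

/-- For `1 ≤ r ≤ √2`, the 4-dimensional Lebesgue measure of the set of pairs of points of
the unit square `[0,1]² ⊂ ℝ²` lying within Euclidean distance `r` of each other equals
`1/3 − 2r²(1 − arcsin(1/r) + arccos(1/r)) + (4/3)(2r² + 1)√(r² − 1) − (1/2) r⁴`.
Equivalently, this is the probability that two independent uniform points of the unit
square are at distance at most `r`. -/
theorem volume_pairs_unitSquare_dist_le' (r : ℝ) (h1 : 1 ≤ r) (h2 : r ≤ Real.sqrt 2) :
    volume {p : EuclideanSpace ℝ (Fin 2) × EuclideanSpace ℝ (Fin 2) |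
        (∀ i, p.1 i ∈ Set.Icc (0 : ℝ) 1) ∧ (∀ i, p.2 i ∈ Set.Icc (0 : ℝ) 1) ∧
          dist p.1 p.2 ≤ r} =
      ENNReal.ofReal (1 / 3 - 2 * r ^ 2 * (1 - arcsin (1 / r) + arccos (1 / r))
        + 4 / 3 * (2 * r ^ 2 + 1) * Real.sqrt (r ^ 2 - 1) - 1 / 2 * r ^ 4) := by
  have hr0 : 0 < r := lt_of_lt_of_le one_pos h1
  have hr21 : 1 ≤ r^2 := by nlinarith
  set T : Set ((ℝ×ℝ)×(ℝ×ℝ)) := {w | w.1.1 ∈ Set.Icc (0:ℝ) 1 ∧ w.1.2 ∈ Set.Icc (0:ℝ) 1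
    ∧ w.2.1 ∈ Set.Icc (0:ℝ) 1 ∧ w.2.2 ∈ Set.Icc (0:ℝ) 1
    ∧ (w.1.1 - w.1.2)^2 + (w.2.1 - w.2.2)^2 ≤ r^2} with hT
  have hTm : MeasurableSet T := by
    have c11 : Measurable fun w : (ℝ×ℝ)×(ℝ×ℝ) => w.1.1 := measurable_fst.fst
    have c12 : Measurable fun w : (ℝ×ℝ)×(ℝ×ℝ) => w.1.2 := measurable_fst.snd
    have c21 : Measurable fun w : (ℝ×ℝ)×(ℝ×ℝ) => w.2.1 := measurable_snd.fst
    have c22 : Measurable fun w : (ℝ×ℝ)×(ℝ×ℝ) => w.2.2 := measurable_snd.snd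
    have hcont : Continuous fun w : (ℝ×ℝ)×(ℝ×ℝ) => (w.1.1 - w.1.2)^2 + (w.2.1 - w.2.2)^2 :=
      (((continuous_fst.fst.sub continuous_fst.snd).pow 2).add
        ((continuous_snd.fst.sub continuous_snd.snd).pow 2))
    exact (c11 measurableSet_Icc).inter ((c12 measurableSet_Icc).inter
      ((c21 measurableSet_Icc).inter ((c22 measurableSet_Icc).inter
        (isClosed_le hcont continuous_const).measurableSet)))
  have hmpc : MeasurePreserving (fun x : EuclideanSpace ℝ (Fin 2) => ((x 0 : ℝ), (x 1 : ℝ)))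
      volume volume :=
    (volume_preserving_finTwoArrow ℝ).comp (EuclideanSpace.volume_preserving_symm_measurableEquiv_toLp (Fin 2))
  have hmp : MeasurePreserving (fun p : EuclideanSpace ℝ (Fin 2) × EuclideanSpace ℝ (Fin 2) =>
      (((p.1 0, p.2 0) : ℝ×ℝ), ((p.1 1, p.2 1) : ℝ×ℝ))) volume volume :=
    mp_regroup.comp (hmpc.prod hmpc)
  have hST : {p : EuclideanSpace ℝ (Fin 2) × EuclideanSpace ℝ (Fin 2) |
        (∀ i, p.1 i ∈ Set.Icc (0 : ℝ) 1) ∧ (∀ i, p.2 i ∈ Set.Icc (0 : ℝ) 1) ∧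
          dist p.1 p.2 ≤ r}
      = (fun p : EuclideanSpace ℝ (Fin 2) × EuclideanSpace ℝ (Fin 2) =>
          (((p.1 0, p.2 0) : ℝ×ℝ), ((p.1 1, p.2 1) : ℝ×ℝ))) ⁻¹' T := by
    ext p
    have hdist : dist p.1 p.2 = Real.sqrt ((p.1 0 - p.2 0)^2 + (p.1 1 - p.2 1)^2) := by
      rw [EuclideanSpace.dist_eq, Fin.sum_univ_two]
      simp [Real.dist_eq, sq_abs]
    simp only [hT, Set.mem_setOf_eq, Set.mem_preimage, Fin.forall_fin_two]
    constructor
    · rintro ⟨⟨hx0, hx1⟩, ⟨hy0, hy1⟩, hd⟩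
      refine ⟨hx0, hy0, hx1, hy1, ?_⟩
      rw [hdist, show r = Real.sqrt (r^2) by rw [Real.sqrt_sq hr0.le]] at hd
      exact (Real.sqrt_le_sqrt_iff (by positivity)).mp hd
    · rintro ⟨hx0, hy0, hx1, hy1, hsum⟩
      refine ⟨⟨hx0, hx1⟩, ⟨hy0, hy1⟩, ?_⟩
      rw [hdist, show r = Real.sqrt (r^2) by rw [Real.sqrt_sq hr0.le]]
      exact Real.sqrt_le_sqrt hsum
  rw [hST, hmp.measure_preimage hTm.nullMeasurableSet]
  rw [Measure.volume_eq_prod, Measure.prod_apply hTm]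
  have hpre2 : ∀ p : ℝ×ℝ, volume (Prod.mk p ⁻¹' T)
      = Set.indicator (Set.Icc (0:ℝ) 1 ×ˢ Set.Icc (0:ℝ) 1)
        (fun p : ℝ×ℝ => ENNReal.ofReal (1 - max (1 - Real.sqrt (r^2 - (p.1 - p.2)^2)) 0 ^ 2)) p := by
    intro p
    by_cases hp : p ∈ Set.Icc (0:ℝ) 1 ×ˢ Set.Icc (0:ℝ) 1
    · rw [Set.indicator_of_mem hp]
      obtain ⟨hp1, hp2⟩ := hp
      have hnn : 0 ≤ r^2 - (p.1 - p.2)^2 := by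
        obtain ⟨a1, a2⟩ := hp1; obtain ⟨b1, b2⟩ := hp2; nlinarith
      have hset : Prod.mk p ⁻¹' T
          = {q : ℝ×ℝ | q.1 ∈ Set.Icc (0:ℝ) 1 ∧ q.2 ∈ Set.Icc (0:ℝ) 1
              ∧ |q.1 - q.2| ≤ Real.sqrt (r^2 - (p.1 - p.2)^2)} := by
        ext q
        simp only [hT, Set.mem_preimage, Set.mem_setOf_eq, hp1, hp2, true_and]
        refine and_congr_right fun _ => and_congr_right fun _ => ?_
        rw [← Real.sqrt_sq_eq_abs, Real.sqrt_le_sqrt_iff hnn]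
        constructor <;> intro h <;> linarith
      rw [hset, volume_strip _ (Real.sqrt_nonneg _)]
    · rw [Set.indicator_of_notMem hp]
      have hemp : Prod.mk p ⁻¹' T = ∅ := by
        ext q
        simp only [hT, Set.mem_preimage, Set.mem_setOf_eq, Set.mem_empty_iff_false, iff_false]
        rintro ⟨hq1, hq2, -⟩
        exact hp (Set.mem_prod.mpr ⟨hq1, hq2⟩)
      simp [hemp]
  simp_rw [hpre2]
  rw [lintegral_indicator (measurableSet_Icc.prod measurableSet_Icc)]
  have hgc2 : Continuous (fun p : ℝ×ℝ => 1 - max (1 - Real.sqrt (r^2 - (p.1 - p.2)^2)) 0 ^ 2) := by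
    have : Continuous (fun p : ℝ×ℝ => Real.sqrt (r^2 - (p.1 - p.2)^2)) :=
      (continuous_const.sub ((continuous_fst.sub continuous_snd).pow 2)).sqrt
    exact continuous_const.sub (((continuous_const.sub this).max continuous_const).pow 2)
  have hnng : ∀ v : ℝ, 0 ≤ 1 - max (1 - Real.sqrt (r^2 - v^2)) 0 ^ 2 := by
    intro v
    have h1' : 1 - Real.sqrt (r^2 - v^2) ≤ 1 := by linarith [Real.sqrt_nonneg (r^2 - v^2)]
    have h2' : max (1 - Real.sqrt (r^2 - v^2)) 0 ≤ 1 := max_le h1' zero_le_one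
    nlinarith [le_max_right (1 - Real.sqrt (r^2 - v^2)) (0:ℝ)]
  have hInt : IntegrableOn (fun p : ℝ×ℝ => 1 - max (1 - Real.sqrt (r^2 - (p.1 - p.2)^2)) 0 ^ 2)
      (Set.Icc (0:ℝ) 1 ×ˢ Set.Icc (0:ℝ) 1) (volume : Measure (ℝ×ℝ)) :=
    hgc2.continuousOn.integrableOn_compact (isCompact_Icc.prod isCompact_Icc)
  rw [← ofReal_integral_eq_lintegral_ofReal hInt
    ((ae_restrict_iff' (measurableSet_Icc.prod measurableSet_Icc)).mpr
      (Filter.Eventually.of_forall (fun p _ => hnng (p.1 - p.2))))]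
  congr 1
  rw [Measure.volume_eq_prod] at hInt
  rw [show (∫ x in Set.Icc (0:ℝ) 1 ×ˢ Set.Icc (0:ℝ) 1,
        (1 - max (1 - Real.sqrt (r^2 - (x.1 - x.2)^2)) 0 ^ 2) ∂(volume : Measure (ℝ×ℝ)))
      = ∫ x in Set.Icc (0:ℝ) 1 ×ˢ Set.Icc (0:ℝ) 1,
        (1 - max (1 - Real.sqrt (r^2 - (x.1 - x.2)^2)) 0 ^ 2)
          ∂((volume : Measure ℝ).prod (volume : Measure ℝ)) from rfl]
  rw [MeasureTheory.setIntegral_prod _ hInt]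
  have hIcc : ∀ (f : ℝ → ℝ), ∫ x, f x ∂(volume.restrict (Set.Icc (0:ℝ) 1))
      = ∫ x in (0:ℝ)..1, f x := by
    intro f
    rw [intervalIntegral.integral_of_le zero_le_one, ← integral_Icc_eq_integral_Ioc]
  rw [hIcc]
  rw [intervalIntegral.integral_congr (g := fun x => ∫ y in (0:ℝ)..1,
    (1 - max (1 - Real.sqrt (r^2 - (x - y)^2)) 0 ^ 2))
    (fun x _ => hIcc (fun y => 1 - max (1 - Real.sqrt (r^2 - (x - y)^2)) 0 ^ 2))]
  rw [double_integral_reduce (fun v => 1 - max (1 - Real.sqrt (r^2 - v^2)) 0 ^ 2)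
    (by
      have : Continuous (fun v : ℝ => Real.sqrt (r^2 - v^2)) :=
        (continuous_const.sub (continuous_pow 2)).sqrt
      exact continuous_const.sub (((continuous_const.sub this).max continuous_const).pow 2))
    (fun v => by simp only [neg_sq])]
  exact calc_main r h1 h2
end
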